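/- Let N ≥ 1 be an integer, 0 < λ ≤ Λ, and k ≥ 1. Let μ_k⁺ and μ_k⁻ be such that the radial eigenvalue problem has a not-identically-zero solution for μ_k⁺ which is positive at 0 with exactly k−1 zeros in (0,1), and one for μ_k⁻ which is negative at 0 with exactly k−1 zeros in (0,1); assume μ_k⁺ ≠ μ_k⁻ and let μ lie strictly between μ_k⁺ and μ_k⁻. Let φ₊, φ₋ ∈ C¹([0,1]) ∩ C²((0,1]) satisfy φ±''(r) = M(−((N−1)/r)·m(φ±'(r)) − μ·φ±(r)) on (0,1] with φ₊(0) = 1, φ₋(0) = −1, φ±'(0) = 0, and suppose there exists r₀ ∈ (0,1) with φ₊(r) > 0 and φ₋(r) > 0 for all r ∈ (r₀, 1]. Then there exists a continuous function g : [0,1] → ℝ such that no u ∈ C¹([0,1]) ∩ C²((0,1]) satisfies u''(r) = M(−((N−1)/r)·m(u'(r)) − μ·u(r) + g(r)) for r ∈ (0, r₀], u''(r) ≥ M(−((N−1)/r)·m(u'(r)) − μ·u(r) + g(r)) for r ∈ (r₀, 1], u'(0) = 0, and u(1) = 0. -/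

import Mathlib

noncomputable def Mfun (lam Lam s : ℝ) : ℝ := if 0 < s then s / Lam else s / lam
noncomputable def mfun (lam Lam s : ℝ) : ℝ := if 0 < s then Lam * s else lam * s

noncomputable def D1 (u : ℝ → ℝ) : ℝ → ℝ := derivWithin u (Set.Icc 0 1)
noncomputable def D2 (u : ℝ → ℝ) : ℝ → ℝ := derivWithin (D1 u) (Set.Ioc 0 1)

/-- A (possibly trivial) solution of the radial eigenvalue problem on the unit ball. -/
def RadialEigen (N : ℕ) (lam Lam μ : ℝ) (v : ℝ → ℝ) : Prop :=
  ContDiffOn ℝ 1 v (Set.Icc 0 1) ∧ ContDiffOn ℝ 2 v (Set.Ioc 0 1) ∧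
  (∀ r ∈ Set.Ioc (0:ℝ) 1,
    D2 v r = Mfun lam Lam (-(((N:ℝ) - 1) / r) * mfun lam Lam (D1 v r) - μ * v r)) ∧
  D1 v 0 = 0 ∧ v 1 = 0

def RadialIVPSol (N : ℕ) (lam Lam : ℝ) (w : ℝ → ℝ) : Prop :=
  ContDiffOn ℝ 1 w (Set.Ici 0) ∧ ContDiffOn ℝ 2 w (Set.Ioi 0) ∧
  w 0 = 1 ∧ derivWithin w (Set.Ici 0) 0 = 0 ∧
  ∀ r ∈ Set.Ioi (0:ℝ),
    deriv (deriv w) r = Mfun lam Lam (-(((N:ℝ) - 1) / r) * mfun lam Lam (deriv w r) - w r)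
open Set Filter Topology

section mfacts
variable {lam Lam : ℝ}

lemma mfun_zero : mfun lam Lam 0 = 0 := by simp [mfun]

lemma mfun_mono (hlam : 0 < lam) (hlL : lam ≤ Lam) {a b : ℝ} (h : a ≤ b) :
    mfun lam Lam a ≤ mfun lam Lam b := by
  have hL : 0 < Lam := lt_of_lt_of_le hlam hlL
  unfold mfun
  split_ifs with h1 h2 h2
  · nlinarith
  · nlinarith
  · nlinarith
  · nlinarith

lemma mfun_slope (hlam : 0 < lam) (hlL : lam ≤ Lam) {a b : ℝ} (h : a ≤ b) :
    lam * (b - a) ≤ mfun lam Lam b - mfun lam Lam a := by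
  have hL : 0 < Lam := lt_of_lt_of_le hlam hlL
  unfold mfun
  split_ifs with h1 h2 h2
  · nlinarith
  · nlinarith
  · nlinarith
  · nlinarith

lemma mfun_lip (hlam : 0 < lam) (hlL : lam ≤ Lam) {a b : ℝ} (h : a ≤ b) :
    mfun lam Lam b - mfun lam Lam a ≤ Lam * (b - a) := by
  have hL : 0 < Lam := lt_of_lt_of_le hlam hlL
  unfold mfun
  split_ifs with h1 h2 h2
  · nlinarith
  · nlinarith
  · nlinarith
  · nlinarith

lemma mfun_dist_lower (hlam : 0 < lam) (hlL : lam ≤ Lam) (x y : ℝ) :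
    lam * |x - y| ≤ |mfun lam Lam x - mfun lam Lam y| := by
  rcases le_total y x with h | h
  · have h1 := mfun_slope hlam hlL h
    have h2 : (0:ℝ) ≤ lam * (x - y) := mul_nonneg hlam.le (by linarith)
    rw [abs_of_nonneg (by linarith : (0:ℝ) ≤ x - y), abs_of_nonneg (by linarith)]
    linarith
  · have h1 := mfun_slope hlam hlL h
    have h2 : (0:ℝ) ≤ lam * (y - x) := mul_nonneg hlam.le (by linarith)
    rw [abs_of_nonpos (by linarith : x - y ≤ 0), abs_of_nonpos (by linarith), neg_sub, neg_sub]
    linarith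

lemma mfun_dist_upper (hlam : 0 < lam) (hlL : lam ≤ Lam) (x y : ℝ) :
    |mfun lam Lam x - mfun lam Lam y| ≤ Lam * |x - y| := by
  rcases le_total y x with h | h
  · have h1 := mfun_lip hlam hlL h
    have h2 := mfun_slope hlam hlL h
    have h3 : (0:ℝ) ≤ lam * (x - y) := mul_nonneg hlam.le (by linarith)
    rw [abs_of_nonneg (by linarith : (0:ℝ) ≤ x - y), abs_of_nonneg (by linarith)]
    linarith
  · have h1 := mfun_lip hlam hlL h
    have h2 := mfun_slope hlam hlL h
    have h3 : (0:ℝ) ≤ lam * (y - x) := mul_nonneg hlam.le (by linarith)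
    rw [abs_of_nonpos (by linarith : x - y ≤ 0), abs_of_nonpos (by linarith), neg_sub, neg_sub]
    linarith

lemma mfun_smul (hlam : 0 < lam) {c : ℝ} (hc : 0 ≤ c) (s : ℝ) :
    mfun lam Lam (c * s) = c * mfun lam Lam s := by
  rcases eq_or_lt_of_le hc with rfl | hc
  · simp [mfun, hlam.not_gt]
  · unfold mfun
    split_ifs with h1 h2 h2
    · ring
    · nlinarith
    · nlinarith
    · ring

lemma mfun_Mfun (hlam : 0 < lam) (hlL : lam ≤ Lam) (s : ℝ) :
    mfun lam Lam (Mfun lam Lam s) = s := by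
  have hL : 0 < Lam := lt_of_lt_of_le hlam hlL
  unfold mfun Mfun
  split_ifs with h1 h2 h2
  · field_simp
  · exact absurd (div_pos h1 hL) h2
  · have : s ≤ 0 := not_lt.mp h1
    nlinarith [div_nonpos_of_nonpos_of_nonneg this hlam.le]
  · field_simp

end mfacts

section slopehelpers

lemma deriv_nonpos_of_min_left {f : ℝ → ℝ} {d x y : ℝ} (hxy : y < x)
    (hd : HasDerivAt f d x) (hmin : ∀ t ∈ Set.Ico y x, f x ≤ f t) : d ≤ 0 := by
  have T : Filter.Tendsto (slope f x) (𝓝[<] x) (𝓝 d) :=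
    (hasDerivAt_iff_tendsto_slope.mp hd).mono_left
      (nhdsWithin_mono _ (fun t ht => ne_of_lt ht))
  refine le_of_tendsto T ?_
  filter_upwards [Ioo_mem_nhdsLT_of_mem (show x ∈ Set.Ioc y x from ⟨hxy, le_rfl⟩)] with t ht
  rw [slope_def_field]
  apply div_nonpos_of_nonneg_of_nonpos
  · exact sub_nonneg.2 (hmin t ⟨ht.1.le, ht.2⟩)
  · linarith [ht.2]

lemma deriv_nonneg_of_min_right {f : ℝ → ℝ} {d x z : ℝ} (hxz : x < z)
    (hd : HasDerivAt f d x) (hmin : ∀ t ∈ Set.Ioo x z, f x ≤ f t) : 0 ≤ d := by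
  have T : Filter.Tendsto (slope f x) (𝓝[>] x) (𝓝 d) :=
    (hasDerivAt_iff_tendsto_slope.mp hd).mono_left
      (nhdsWithin_mono _ (fun t ht => ne_of_gt ht))
  refine ge_of_tendsto T ?_
  filter_upwards [Ioo_mem_nhdsGT_of_mem (show x ∈ Set.Ico x z from ⟨le_rfl, hxz⟩)] with t ht
  rw [slope_def_field]
  apply div_nonneg
  · exact sub_nonneg.2 (hmin t ht)
  · linarith [ht.1]

lemma exists_slope_lower {f : ℝ → ℝ} {d c x : ℝ} (hd : HasDerivAt f d x) (hc : c < d) :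
    ∃ z, x < z ∧ ∀ t ∈ Set.Ioo x z, c * (t - x) < f t - f x := by
  have T : Filter.Tendsto (slope f x) (𝓝[>] x) (𝓝 d) :=
    (hasDerivAt_iff_tendsto_slope.mp hd).mono_left
      (nhdsWithin_mono _ (fun t ht => ne_of_gt ht))
  have hev : {t | c < slope f x t} ∈ 𝓝[>] x := T.eventually (eventually_gt_nhds hc)
  obtain ⟨z, hz, hsub⟩ := mem_nhdsGT_iff_exists_Ioo_subset.mp hev
  refine ⟨z, hz, fun t ht => ?_⟩
  have := hsub ht
  rw [Set.mem_setOf_eq, slope_def_field, lt_div_iff₀ (by linarith [ht.1] : (0:ℝ) < t - x)] at this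
  linarith

end slopehelpers

section mvt

lemma mvt' {f f' : ℝ → ℝ} {a ρ C : ℝ} (haρ : a ≤ ρ)
    (hf : ContinuousOn f (Set.Icc a ρ))
    (hd : ∀ t ∈ Set.Ioc a ρ, HasDerivAt f (f' t) t)
    (hC : ∀ t ∈ Set.Ioc a ρ, |f' t| ≤ C) :
    ∀ r ∈ Set.Icc a ρ, |f r - f a| ≤ C * (r - a) := by
  intro r hr
  rcases eq_or_lt_of_le hr.1 with rfl | har
  · simp
  have key : ∀ a' ∈ Set.Ioc a r, |f r - f a'| ≤ C * (r - a') := by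
    intro a' ha'
    have hss : Set.Icc a' r ⊆ Set.Ioc a ρ := fun t ht =>
      ⟨lt_of_lt_of_le ha'.1 ht.1, le_trans ht.2 hr.2⟩
    have := Convex.norm_image_sub_le_of_norm_hasDerivWithin_le
      (f := f) (f' := f') (s := Set.Icc a' r) (C := C)
      (fun t ht => (hd t (hss ht)).hasDerivWithinAt)
      (fun t ht => by rw [Real.norm_eq_abs]; exact hC t (hss ht))
      (convex_Icc _ _) (Set.left_mem_Icc.2 ha'.2) (Set.right_mem_Icc.2 ha'.2)
    rw [Real.norm_eq_abs, Real.norm_eq_abs,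
      abs_of_nonneg (by linarith [ha'.2] : (0:ℝ) ≤ r - a')] at this
    exact this
  have hneb : (𝓝[Set.Ioc a r] a).NeBot := by
    rw [← mem_closure_iff_nhdsWithin_neBot, closure_Ioc har.ne]
    exact ⟨le_rfl, har.le⟩
  have hfc : Filter.Tendsto f (𝓝[Set.Ioc a r] a) (𝓝 (f a)) :=
    (hf a (Set.left_mem_Icc.2 haρ)).tendsto.mono_left
      (nhdsWithin_mono a (fun t ht => ⟨ht.1.le, le_trans ht.2 hr.2⟩))
  have hida : Filter.Tendsto (fun a' : ℝ => a') (𝓝[Set.Ioc a r] a) (𝓝 a) :=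
    tendsto_id.mono_right nhdsWithin_le_nhds
  refine le_of_tendsto_of_tendsto
    (f := fun a' => |f r - f a'|) (g := fun a' => C * (r - a'))
    ((tendsto_const_nhds.sub hfc).abs) (tendsto_const_nhds.mul (tendsto_const_nhds.sub hida))
    ?_
  filter_upwards [self_mem_nhdsWithin] with a' ha'
  exact key a' ha'

end mvt
section plumb
open Set Filter Topology

lemma plumb {w : ℝ → ℝ} (hw1 : ContDiffOn ℝ 1 w (Set.Icc 0 1))
    (hw2 : ContDiffOn ℝ 2 w (Set.Ioc 0 1)) :
    ContinuousOn w (Set.Icc 0 1) ∧ ContinuousOn (D1 w) (Set.Icc 0 1) ∧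
    (∀ r ∈ Set.Ioo (0:ℝ) 1, HasDerivAt w (D1 w r) r) ∧
    (∀ r ∈ Set.Ioo (0:ℝ) 1, HasDerivAt (D1 w) (D2 w r) r) := by
  have hIccmem : ∀ r ∈ Set.Ioo (0:ℝ) 1, Set.Icc (0:ℝ) 1 ∈ 𝓝 r := fun r hr =>
    Icc_mem_nhds hr.1 hr.2
  have hIocmem : ∀ r ∈ Set.Ioo (0:ℝ) 1, Set.Ioc (0:ℝ) 1 ∈ 𝓝 r := fun r hr =>
    Filter.mem_of_superset (Ioo_mem_nhds hr.1 hr.2) Set.Ioo_subset_Ioc_self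
  have hd1 : ∀ r ∈ Set.Ioo (0:ℝ) 1, HasDerivAt w (D1 w r) r := by
    intro r hr
    have hda : DifferentiableAt ℝ w r :=
      ((hw1 r ⟨hr.1.le, hr.2.le⟩).contDiffAt (hIccmem r hr)).differentiableAt one_ne_zero
    have : D1 w r = deriv w r := derivWithin_of_mem_nhds (hIccmem r hr)
    rw [this]
    exact hda.hasDerivAt
  refine ⟨hw1.continuousOn,
    hw1.continuousOn_derivWithin (uniqueDiffOn_Icc one_pos) le_rfl, hd1, ?_⟩
  intro r hr
  set W : ℝ → ℝ := derivWithin w (Set.Ioc 0 1) with hW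
  have hWc : ContDiffOn ℝ 1 W (Set.Ioc 0 1) :=
    hw2.derivWithin (uniqueDiffOn_Ioc 0 1) (by norm_num)
  have hWd : DifferentiableAt ℝ W r :=
    ((hWc r ⟨hr.1, hr.2.le⟩).contDiffAt (hIocmem r hr)).differentiableAt one_ne_zero
  have hEv : D1 w =ᶠ[𝓝 r] W := by
    filter_upwards [Ioo_mem_nhds hr.1 hr.2] with t ht
    rw [show D1 w t = deriv w t from derivWithin_of_mem_nhds (hIccmem t ht),
      show W t = deriv w t from derivWithin_of_mem_nhds (hIocmem t ht)]
  have hD2 : D2 w r = deriv W r := by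
    rw [show D2 w r = deriv (D1 w) r from derivWithin_of_mem_nhds (hIocmem r hr)]
    exact hEv.deriv_eq
  rw [hD2]
  exact hWd.hasDerivAt.congr_of_eventuallyEq hEv

end plumb

section iterate
open Set

lemma iterate_cover (a b s : ℝ) (hs : 0 < s) (hab : a ≤ b) (P : ℝ → Prop) (hPa : P a)
    (step : ∀ α, a ≤ α → α < b → P α → ∀ r ∈ Set.Icc α (min (α + s) b), P r) :
    ∀ r ∈ Set.Icc a b, P r := by
  have key : ∀ n : ℕ, ∀ r ∈ Set.Icc a (min (a + n * s) b), P r := by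
    intro n
    induction n with
    | zero =>
      intro r hr
      have : min (a + (0:ℕ) * s) b = a := by simp [hab]
      rw [this] at hr
      have : r = a := le_antisymm hr.2 hr.1
      rwa [this]
    | succ n ih =>
      intro r hr
      rcases le_or_gt b (a + n * s) with hble | hlt
      · refine ih r ?_
        rw [min_eq_right hble]
        rwa [min_eq_right (le_trans hble (by push_cast; nlinarith))] at hr
      · have hmin : min (a + n * s) b = a + n * s := min_eq_left hlt.le
        have haα : a ≤ a + n * s := by nlinarith [Nat.cast_nonneg (α := ℝ) n]
        have hPα : P (a + n * s) := ih _ (by rw [hmin]; exact ⟨haα, le_rfl⟩)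
        rcases le_or_gt r (a + n * s) with hrα | hαr
        · exact ih r (by rw [hmin]; exact ⟨hr.1, hrα⟩)
        · refine step (a + n * s) haα hlt hPα r ⟨hαr.le, ?_⟩
          have : a + (n + 1 : ℕ) * s = a + n * s + s := by push_cast; ring
          rw [← this]
          exact hr.2
  obtain ⟨n, hn⟩ := exists_nat_gt ((b - a) / s)
  intro r hr
  refine key n r ?_
  have : b ≤ a + n * s := by
    rw [div_lt_iff₀ hs] at hn
    linarith
  rwa [min_eq_right this]

end iterate
section uniq
open Set Filter Topology

lemma uniq_int (lam Lam : ℝ) (hlam : 0 < lam) (hlL : lam ≤ Lam) (N : ℕ) (μ : ℝ)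
    (a b B : ℝ) (hab : a < b)
    (hB : ∀ r ∈ Set.Ioc a b, |((N:ℝ) - 1) / r| ≤ B)
    (w₁ w₂ G₁ G₂ K₁ K₂ : ℝ → ℝ)
    (hw₁c : ContinuousOn w₁ (Set.Icc a b)) (hw₂c : ContinuousOn w₂ (Set.Icc a b))
    (hG₁c : ContinuousOn G₁ (Set.Icc a b)) (hG₂c : ContinuousOn G₂ (Set.Icc a b))
    (hd₁ : ∀ r ∈ Set.Ioc a b, HasDerivAt w₁ (G₁ r) r)
    (hd₂ : ∀ r ∈ Set.Ioc a b, HasDerivAt w₂ (G₂ r) r)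
    (hdd₁ : ∀ r ∈ Set.Ioc a b, HasDerivAt G₁ (K₁ r) r)
    (hdd₂ : ∀ r ∈ Set.Ioc a b, HasDerivAt G₂ (K₂ r) r)
    (he₁ : ∀ r ∈ Set.Ioc a b,
      mfun lam Lam (K₁ r) = -(((N:ℝ) - 1) / r) * mfun lam Lam (G₁ r) - μ * w₁ r)
    (he₂ : ∀ r ∈ Set.Ioc a b,
      mfun lam Lam (K₂ r) = -(((N:ℝ) - 1) / r) * mfun lam Lam (G₂ r) - μ * w₂ r)
    (hw0 : w₁ a = w₂ a) (hG0 : G₁ a = G₂ a) :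
    ∀ r ∈ Set.Icc a b, w₁ r = w₂ r ∧ G₁ r = G₂ r := by
  have hB0 : 0 ≤ B := le_trans (abs_nonneg _) (hB b ⟨hab, le_rfl⟩)
  have hLam : 0 < Lam := lt_of_lt_of_le hlam hlL
  set C : ℝ := (B * Lam + |μ|) / lam with hCdef
  have hC0 : 0 ≤ C := div_nonneg (by positivity) hlam.le
  set s : ℝ := min 1 (lam / (2 * (B * Lam + |μ| + 1))) with hsdef
  have hspos : 0 < s := lt_min one_pos (by positivity)
  have hs1 : s ≤ 1 := min_le_left _ _
  have hsC : C * s ≤ 1 / 2 := by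
    have h1 : s ≤ lam / (2 * (B * Lam + |μ| + 1)) := min_le_right _ _
    have h2 : C * s ≤ C * (lam / (2 * (B * Lam + |μ| + 1))) :=
      mul_le_mul_of_nonneg_left h1 hC0
    refine le_trans h2 ?_
    rw [hCdef, div_mul_div_comm, div_le_div_iff₀ (by positivity) (by norm_num)]
    nlinarith [abs_nonneg μ]
  refine iterate_cover a b s hspos hab.le (fun x => w₁ x = w₂ x ∧ G₁ x = G₂ x) ⟨hw0, hG0⟩ ?_
  intro α haα hαb hPα r hrmem
  set ρ := min (α + s) b with hρdef
  have hαρ : α < ρ := lt_min (by linarith) hαb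
  have hρb : ρ ≤ b := min_le_right _ _
  have hρs : ρ ≤ α + s := min_le_left _ _
  have hsubI : Set.Icc α ρ ⊆ Set.Icc a b := Set.Icc_subset_Icc haα hρb
  have hsubO : Set.Ioc α ρ ⊆ Set.Ioc a b := fun t ht =>
    ⟨lt_of_le_of_lt haα ht.1, le_trans ht.2 hρb⟩
  obtain ⟨rb, hrbmem, hrbmax⟩ := isCompact_Icc.exists_isMaxOn (Set.nonempty_Icc.2 hαρ.le)
    (((hG₁c.sub hG₂c).mono hsubI).abs)
  set ω := |G₁ rb - G₂ rb| with hωdef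
  have hωb : ∀ t ∈ Set.Icc α ρ, |G₁ t - G₂ t| ≤ ω := fun t ht => hrbmax ht
  have hω0 : 0 ≤ ω := abs_nonneg _
  have hwb : ∀ t ∈ Set.Icc α ρ, |w₁ t - w₂ t| ≤ ω * (t - α) := by
    intro t ht
    have := mvt' (f := fun x => w₁ x - w₂ x) (f' := fun x => G₁ x - G₂ x) hαρ.le
      ((hw₁c.sub hw₂c).mono hsubI)
      (fun x hx => (hd₁ x (hsubO hx)).sub (hd₂ x (hsubO hx)))
      (fun x hx => hωb x (Set.Ioc_subset_Icc_self hx)) t ht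
    simpa only [hPα.1, sub_self, sub_zero] using this
  have hKb : ∀ t ∈ Set.Ioc α ρ, |K₁ t - K₂ t| ≤ C * ω := by
    intro t ht
    have htO := hsubO ht
    have h1 : lam * |K₁ t - K₂ t| ≤ |mfun lam Lam (K₁ t) - mfun lam Lam (K₂ t)| :=
      mfun_dist_lower hlam hlL _ _
    rw [he₁ t htO, he₂ t htO] at h1
    have heq : (-(((N:ℝ) - 1) / t) * mfun lam Lam (G₁ t) - μ * w₁ t) -
        (-(((N:ℝ) - 1) / t) * mfun lam Lam (G₂ t) - μ * w₂ t)
        = (-(((N:ℝ) - 1) / t)) * (mfun lam Lam (G₁ t) - mfun lam Lam (G₂ t))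
          - μ * (w₁ t - w₂ t) := by ring
    rw [heq] at h1
    have h2a : |(-(((N:ℝ) - 1) / t)) * (mfun lam Lam (G₁ t) - mfun lam Lam (G₂ t))|
        ≤ B * (Lam * ω) := by
      rw [abs_mul, abs_neg]
      have hG : |mfun lam Lam (G₁ t) - mfun lam Lam (G₂ t)| ≤ Lam * ω :=
        le_trans (mfun_dist_upper hlam hlL (G₁ t) (G₂ t))
          (mul_le_mul_of_nonneg_left (hωb t (Set.Ioc_subset_Icc_self ht)) hLam.le)
      exact mul_le_mul (hB t htO) hG (abs_nonneg _) hB0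
    have h2b : |μ * (w₁ t - w₂ t)| ≤ |μ| * ω := by
      rw [abs_mul]
      have := hwb t (Set.Ioc_subset_Icc_self ht)
      have h2c : ω * (t - α) ≤ ω * 1 :=
        mul_le_mul_of_nonneg_left (by linarith [ht.2, min_le_left (α + s) b, hs1]) hω0
      have : |w₁ t - w₂ t| ≤ ω := by
        refine le_trans this ?_
        linarith
      exact mul_le_mul_of_nonneg_left this (abs_nonneg _)
    have h4 : lam * |K₁ t - K₂ t| ≤ B * (Lam * ω) + |μ| * ω :=
      le_trans h1 (le_trans (abs_sub _ _) (add_le_add h2a h2b))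
    rw [hCdef, div_mul_eq_mul_div, le_div_iff₀ hlam]
    nlinarith
  have hωbound : ω ≤ C * ω * s := by
    have := mvt' (f := fun x => G₁ x - G₂ x) (f' := fun x => K₁ x - K₂ x) hαρ.le
      ((hG₁c.sub hG₂c).mono hsubI)
      (fun x hx => (hdd₁ x (hsubO hx)).sub (hdd₂ x (hsubO hx)))
      hKb rb hrbmem
    simp only [hPα.2, sub_self, sub_zero] at this
    refine le_trans this ?_
    have h5 : rb - α ≤ s := by
      have := hrbmem.2
      have := min_le_left (α + s) b
      simp only [← hρdef] at *
      linarith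
    have h6 : 0 ≤ rb - α := by linarith [hrbmem.1]
    have : C * ω * (rb - α) ≤ C * ω * s :=
      mul_le_mul_of_nonneg_left h5 (by positivity)
    linarith
  have hωzero : ω = 0 := by
    have : C * ω * s = C * s * ω := by ring
    rw [this] at hωbound
    nlinarith
  have hrmem' : r ∈ Set.Icc α ρ := by
    refine ⟨hrmem.1, ?_⟩
    rw [hρdef]
    exact hrmem.2
  constructor
  · have := hwb r hrmem'
    rw [hωzero, zero_mul] at this
    have := abs_nonpos_iff.mp (le_trans this le_rfl)
    linarith [abs_nonneg (w₁ r - w₂ r), sub_eq_zero.mp this]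
  · have := hωb r hrmem'
    rw [hωzero] at this
    have := abs_nonpos_iff.mp this
    linarith [sub_eq_zero.mp this]
lemma sign_key (lam Lam : ℝ) (hlam : 0 < lam) (hlL : lam ≤ Lam) (N : ℕ) (μ : ℝ)
    (hN2 : (1:ℝ) ≤ (N:ℝ) - 1)
    (a b α ρ : ℝ) (ha0 : 0 ≤ a) (haα : a ≤ α) (hαρ : α < ρ) (hρb : ρ ≤ b) (hb1 : b ≤ 1)
    (ω s : ℝ) (hsμ : |μ| * s ≤ lam / 2) (hρs : ρ ≤ α + s)
    (v₁ v₂ F₁ F₂ L₁ L₂ : ℝ → ℝ) (rb : ℝ) (hrbmem : rb ∈ Set.Icc α ρ)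
    (hddF₁ : ∀ r ∈ Set.Ioc a b, HasDerivAt F₁ (L₁ r) r)
    (hddF₂ : ∀ r ∈ Set.Ioc a b, HasDerivAt F₂ (L₂ r) r)
    (heL₁ : ∀ r ∈ Set.Ioc a b,
      mfun lam Lam (L₁ r) = -(((N:ℝ) - 1) / r) * mfun lam Lam (F₁ r) - μ * v₁ r)
    (heL₂ : ∀ r ∈ Set.Ioc a b,
      mfun lam Lam (L₂ r) = -(((N:ℝ) - 1) / r) * mfun lam Lam (F₂ r) - μ * v₂ r)
    (hminF : ∀ t ∈ Set.Icc α ρ, F₁ rb - F₂ rb ≤ F₁ t - F₂ t)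
    (hvb : ∀ t ∈ Set.Icc α ρ, |v₁ t - v₂ t| ≤ ω * (t - α))
    (hFα : F₁ α - F₂ α = 0)
    (hFrb : F₁ rb - F₂ rb = -ω) (hωpos : 0 < ω) : False := by
  have hω0 : 0 ≤ ω := hωpos.le
  have hαrb : α < rb := by
    rcases eq_or_lt_of_le hrbmem.1 with h | h
    · exfalso; rw [← h] at hFrb; rw [hFα] at hFrb; linarith
    · exact h
  have hrbO : rb ∈ Set.Ioc a b := ⟨lt_of_le_of_lt haα hαrb, le_trans hrbmem.2 hρb⟩
  have hrb0 : 0 < rb := lt_of_le_of_lt (le_trans ha0 haα) hαrb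
  have hdK : L₁ rb - L₂ rb ≤ 0 := by
    refine deriv_nonpos_of_min_left hαrb ((hddF₁ rb hrbO).sub (hddF₂ rb hrbO)) ?_
    intro t ht
    have : F₁ rb - F₂ rb ≤ F₁ t - F₂ t :=
      hminF t ⟨ht.1, le_trans ht.2.le hrbmem.2⟩
    simpa using this
  have hmono : mfun lam Lam (L₁ rb) ≤ mfun lam Lam (L₂ rb) :=
    mfun_mono hlam hlL (by linarith)
  have heq1 := heL₁ rb hrbO
  have heq2 := heL₂ rb hrbO
  have hslope : lam * ω ≤ mfun lam Lam (F₂ rb) - mfun lam Lam (F₁ rb) := by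
    have := mfun_slope hlam hlL (show F₁ rb ≤ F₂ rb by linarith)
    have hFd : F₂ rb - F₁ rb = ω := by linarith
    rw [hFd] at this
    exact this
  have hcoef : 1 ≤ ((N:ℝ) - 1) / rb := by
    rw [le_div_iff₀ hrb0]
    have : rb ≤ 1 := le_trans hrbmem.2 (le_trans hρb hb1)
    linarith
  have hvrb : |v₁ rb - v₂ rb| ≤ ω * s := by
    have := hvb rb hrbmem
    have h5 : rb - α ≤ s := by linarith [hrbmem.2]
    nlinarith
  have hcomb : mfun lam Lam (L₁ rb) - mfun lam Lam (L₂ rb)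
      = (((N:ℝ) - 1) / rb) * (mfun lam Lam (F₂ rb) - mfun lam Lam (F₁ rb))
        - μ * (v₁ rb - v₂ rb) := by
    rw [heq1, heq2]; ring
  have hlower : lam * ω - |μ| * (ω * s)
      ≤ mfun lam Lam (L₁ rb) - mfun lam Lam (L₂ rb) := by
    rw [hcomb]
    have h8 : lam * ω ≤ (((N:ℝ) - 1) / rb) * (mfun lam Lam (F₂ rb) - mfun lam Lam (F₁ rb)) := by
      have h9 : 0 ≤ mfun lam Lam (F₂ rb) - mfun lam Lam (F₁ rb) := by nlinarith
      nlinarith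
    have h10 : μ * (v₁ rb - v₂ rb) ≤ |μ| * (ω * s) := by
      calc μ * (v₁ rb - v₂ rb) ≤ |μ * (v₁ rb - v₂ rb)| := le_abs_self _
        _ = |μ| * |v₁ rb - v₂ rb| := abs_mul _ _
        _ ≤ |μ| * (ω * s) := mul_le_mul_of_nonneg_left hvrb (abs_nonneg _)
    linarith
  have hfin : lam * ω - |μ| * (ω * s) ≤ 0 := by linarith
  nlinarith [mul_le_mul_of_nonneg_left hsμ hω0]

lemma uniq_sign (lam Lam : ℝ) (hlam : 0 < lam) (hlL : lam ≤ Lam) (N : ℕ) (μ : ℝ)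
    (hN2 : (1:ℝ) ≤ (N:ℝ) - 1)
    (a b : ℝ) (hab : a < b) (ha0 : 0 ≤ a) (hb1 : b ≤ 1)
    (w₁ w₂ G₁ G₂ K₁ K₂ : ℝ → ℝ)
    (hw₁c : ContinuousOn w₁ (Set.Icc a b)) (hw₂c : ContinuousOn w₂ (Set.Icc a b))
    (hG₁c : ContinuousOn G₁ (Set.Icc a b)) (hG₂c : ContinuousOn G₂ (Set.Icc a b))
    (hd₁ : ∀ r ∈ Set.Ioc a b, HasDerivAt w₁ (G₁ r) r)
    (hd₂ : ∀ r ∈ Set.Ioc a b, HasDerivAt w₂ (G₂ r) r)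
    (hdd₁ : ∀ r ∈ Set.Ioc a b, HasDerivAt G₁ (K₁ r) r)
    (hdd₂ : ∀ r ∈ Set.Ioc a b, HasDerivAt G₂ (K₂ r) r)
    (he₁ : ∀ r ∈ Set.Ioc a b,
      mfun lam Lam (K₁ r) = -(((N:ℝ) - 1) / r) * mfun lam Lam (G₁ r) - μ * w₁ r)
    (he₂ : ∀ r ∈ Set.Ioc a b,
      mfun lam Lam (K₂ r) = -(((N:ℝ) - 1) / r) * mfun lam Lam (G₂ r) - μ * w₂ r)
    (hw0 : w₁ a = w₂ a) (hG0 : G₁ a = G₂ a) :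
    ∀ r ∈ Set.Icc a b, w₁ r = w₂ r ∧ G₁ r = G₂ r := by
  have hLam : 0 < Lam := lt_of_lt_of_le hlam hlL
  set s : ℝ := min 1 (lam / (2 * (|μ| + 1))) with hsdef
  have hspos : 0 < s := lt_min one_pos (by positivity)
  have hs1 : s ≤ 1 := min_le_left _ _
  have hsμ : |μ| * s ≤ lam / 2 := by
    have h1 : s ≤ lam / (2 * (|μ| + 1)) := min_le_right _ _
    have h2 : |μ| * s ≤ |μ| * (lam / (2 * (|μ| + 1))) :=
      mul_le_mul_of_nonneg_left h1 (abs_nonneg μ)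
    refine le_trans h2 ?_
    rw [mul_div_assoc']
    rw [div_le_div_iff₀ (by positivity) (by norm_num)]
    nlinarith [abs_nonneg μ]
  refine iterate_cover a b s hspos hab.le (fun x => w₁ x = w₂ x ∧ G₁ x = G₂ x) ⟨hw0, hG0⟩ ?_
  intro α haα hαb hPα r hrmem
  set ρ := min (α + s) b with hρdef
  have hαρ : α < ρ := lt_min (by linarith) hαb
  have hρb : ρ ≤ b := min_le_right _ _
  have hρs : ρ ≤ α + s := min_le_left _ _
  have hsubI : Set.Icc α ρ ⊆ Set.Icc a b := Set.Icc_subset_Icc haα hρb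
  have hsubO : Set.Ioc α ρ ⊆ Set.Ioc a b := fun t ht =>
    ⟨lt_of_le_of_lt haα ht.1, le_trans ht.2 hρb⟩
  obtain ⟨rb, hrbmem, hrbmax⟩ := isCompact_Icc.exists_isMaxOn (Set.nonempty_Icc.2 hαρ.le)
    (((hG₁c.sub hG₂c).mono hsubI).abs)
  set ω := |G₁ rb - G₂ rb| with hωdef
  have hωb : ∀ t ∈ Set.Icc α ρ, |G₁ t - G₂ t| ≤ ω := fun t ht => hrbmax ht
  have hω0 : 0 ≤ ω := abs_nonneg _
  have hwb : ∀ t ∈ Set.Icc α ρ, |w₁ t - w₂ t| ≤ ω * (t - α) := by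
    intro t ht
    have := mvt' (f := fun x => w₁ x - w₂ x) (f' := fun x => G₁ x - G₂ x) hαρ.le
      ((hw₁c.sub hw₂c).mono hsubI)
      (fun x hx => (hd₁ x (hsubO hx)).sub (hd₂ x (hsubO hx)))
      (fun x hx => hωb x (Set.Ioc_subset_Icc_self hx)) t ht
    simpa only [hPα.1, sub_self, sub_zero] using this
  have key := fun v₁ v₂ F₁ F₂ L₁ L₂ h1 h2 h3 h4 h5 h6 =>
    sign_key lam Lam hlam hlL N μ hN2 a b α ρ ha0 haα hαρ hρb hb1 ω s hsμ hρs
      v₁ v₂ F₁ F₂ L₁ L₂ rb hrbmem h1 h2 h3 h4 h5 h6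
  -- apply the key lemma in both directions
  have hωzero : ω = 0 := by
    by_contra hne
    have hωpos : 0 < ω := lt_of_le_of_ne hω0 (Ne.symm hne)
    rcases abs_choice (G₁ rb - G₂ rb) with hcase | hcase
    · -- G₁ rb - G₂ rb = ω, so for the swapped pair the difference is -ω
      refine key w₂ w₁ G₂ G₁ K₂ K₁ hdd₂ hdd₁ he₂ he₁ ?_ ?_ ?_ ?_ hωpos
      · intro t ht
        have h1 := hωb t ht
        rw [abs_sub_comm] at h1
        have h2 := neg_abs_le (G₂ t - G₁ t)
        have h3 : G₂ rb - G₁ rb = -ω := by rw [hωdef, hcase]; ring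
        linarith
      · intro t ht
        have := hwb t ht
        rwa [abs_sub_comm] at this
      · rw [hPα.2]; ring
      · rw [hωdef, hcase]; ring
    · -- G₁ rb - G₂ rb = -ω
      refine key w₁ w₂ G₁ G₂ K₁ K₂ hdd₁ hdd₂ he₁ he₂ ?_ hwb ?_ ?_ hωpos
      · intro t ht
        have h1 := hωb t ht
        have h2 := neg_abs_le (G₁ t - G₂ t)
        have h3 : G₁ rb - G₂ rb = -ω := by rw [hωdef, hcase]; ring
        linarith
      · rw [hPα.2]; ring
      · rw [hωdef, hcase]; ring
  have hrmem' : r ∈ Set.Icc α ρ := ⟨hrmem.1, by rw [hρdef]; exact hrmem.2⟩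
  constructor
  · have := hwb r hrmem'
    rw [hωzero, zero_mul] at this
    have := abs_nonpos_iff.mp this
    linarith [sub_eq_zero.mp this]
  · have := hωb r hrmem'
    rw [hωzero] at this
    have := abs_nonpos_iff.mp this
    linarith [sub_eq_zero.mp this]
lemma cont_small {f : ℝ → ℝ} {x ε : ℝ} (hf : ContinuousAt f x) (hfx : f x = 0) (hε : 0 < ε) :
    ∃ δ > 0, ∀ t, |t - x| ≤ δ → |f t| ≤ ε := by
  obtain ⟨δ, hδ, h⟩ := Metric.continuousAt_iff.mp hf ε hε
  refine ⟨δ / 2, by linarith, fun t ht => ?_⟩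
  have h2 : dist t x < δ := by rw [Real.dist_eq]; linarith
  have := h h2
  rw [Real.dist_eq, hfx, sub_zero] at this
  linarith

lemma final_contra (lam Lam : ℝ) (hlam : 0 < lam) (hlL : lam ≤ Lam) (N : ℕ) (μ r₀ : ℝ)
    (u φ : ℝ → ℝ) (τ r₁ : ℝ)
    (hτ : 0 ≤ τ) (hr₁ : r₁ ∈ Set.Ioc r₀ 1)
    (hueq : u r₁ = τ * φ r₁) (hu'eq : D1 u r₁ = τ * D1 φ r₁)
    (hu''le : D2 u r₁ ≤ τ * D2 φ r₁)
    (hφeqm : mfun lam Lam (D2 φ r₁)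
      = -(((N:ℝ) - 1) / r₁) * mfun lam Lam (D1 φ r₁) - μ * φ r₁)
    (hineq : -(((N:ℝ) - 1) / r₁) * mfun lam Lam (D1 u r₁) - μ * u r₁ + max (r₁ - r₀) 0
      ≤ mfun lam Lam (D2 u r₁)) :
    False := by
  have h1 : mfun lam Lam (D2 u r₁) ≤ τ * mfun lam Lam (D2 φ r₁) := by
    rw [← mfun_smul hlam hτ]
    exact mfun_mono hlam hlL hu''le
  have h2 : τ * mfun lam Lam (D2 φ r₁)
      = -(((N:ℝ) - 1) / r₁) * mfun lam Lam (D1 u r₁) - μ * u r₁ := by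
    rw [hφeqm, hueq, hu'eq, mfun_smul hlam hτ]; ring
  have h3 : max (r₁ - r₀) (0:ℝ) = r₁ - r₀ := max_eq_left (by linarith [hr₁.1])
  rw [h3] at hineq
  linarith [hr₁.1]
set_option maxHeartbeats 1000000 in
/-- non-existence lemma: for `μ` strictly between `μ_k⁺` and `μ_k⁻`
there is a continuous right-hand side `g` for which the mixed equation/inequality
radial problem has no solution. -/
theorem stmt_18 (N : ℕ) (hN : 1 ≤ N) (lam Lam : ℝ) (hlam : 0 < lam) (hlL : lam ≤ Lam)
    (k : ℕ) (hk : 1 ≤ k) (μkp μkm μ : ℝ)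
    (hkp : ∃ v : ℝ → ℝ, RadialEigen N lam Lam μkp v ∧ 0 < v 0 ∧
      {r | r ∈ Set.Ioo (0:ℝ) 1 ∧ v r = 0}.ncard = k - 1)
    (hkm : ∃ v : ℝ → ℝ, RadialEigen N lam Lam μkm v ∧ v 0 < 0 ∧
      {r | r ∈ Set.Ioo (0:ℝ) 1 ∧ v r = 0}.ncard = k - 1)
    (hne : μkp ≠ μkm)
    (hμ : min μkp μkm < μ ∧ μ < max μkp μkm)
    (φp φm : ℝ → ℝ)
    (hφpreg : ContDiffOn ℝ 1 φp (Set.Icc 0 1) ∧ ContDiffOn ℝ 2 φp (Set.Ioc 0 1))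
    (hφmreg : ContDiffOn ℝ 1 φm (Set.Icc 0 1) ∧ ContDiffOn ℝ 2 φm (Set.Ioc 0 1))
    (hφpeq : ∀ r ∈ Set.Ioc (0:ℝ) 1,
      D2 φp r = Mfun lam Lam (-(((N:ℝ) - 1) / r) * mfun lam Lam (D1 φp r) - μ * φp r))
    (hφmeq : ∀ r ∈ Set.Ioc (0:ℝ) 1,
      D2 φm r = Mfun lam Lam (-(((N:ℝ) - 1) / r) * mfun lam Lam (D1 φm r) - μ * φm r))
    (hφp0 : φp 0 = 1) (hφm0 : φm 0 = -1)
    (hφp0' : D1 φp 0 = 0) (hφm0' : D1 φm 0 = 0)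
    (r₀ : ℝ) (hr₀ : r₀ ∈ Set.Ioo (0:ℝ) 1)
    (hpos : ∀ r ∈ Set.Ioc r₀ 1, 0 < φp r ∧ 0 < φm r) :
    ∃ g : ℝ → ℝ, ContinuousOn g (Set.Icc 0 1) ∧
      ¬ ∃ u : ℝ → ℝ, ContDiffOn ℝ 1 u (Set.Icc 0 1) ∧ ContDiffOn ℝ 2 u (Set.Ioc 0 1) ∧
        (∀ r ∈ Set.Ioc (0:ℝ) r₀,
          D2 u r = Mfun lam Lam
            (-(((N:ℝ) - 1) / r) * mfun lam Lam (D1 u r) - μ * u r + g r)) ∧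
        (∀ r ∈ Set.Ioc r₀ 1,
          Mfun lam Lam
            (-(((N:ℝ) - 1) / r) * mfun lam Lam (D1 u r) - μ * u r + g r) ≤ D2 u r) ∧
        D1 u 0 = 0 ∧ u 1 = 0 := by
  obtain ⟨r₀pos, r₀lt1⟩ := hr₀
  refine ⟨fun r => max (r - r₀) 0, ?_, ?_⟩
  · exact ((continuous_id.sub continuous_const).max continuous_const).continuousOn
  rintro ⟨u, hu1, hu2, heqIn0, hineqOut0, hu0', hu1val⟩
  have heqIn : ∀ r ∈ Set.Ioc (0:ℝ) r₀,
      D2 u r = Mfun lam Lam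
        (-(((N:ℝ) - 1) / r) * mfun lam Lam (D1 u r) - μ * u r + max (r - r₀) 0) := heqIn0
  have hineqOut : ∀ r ∈ Set.Ioc r₀ (1:ℝ),
      Mfun lam Lam
        (-(((N:ℝ) - 1) / r) * mfun lam Lam (D1 u r) - μ * u r + max (r - r₀) 0)
      ≤ D2 u r := hineqOut0
  clear heqIn0 hineqOut0
  -- regularity plumbing
  obtain ⟨huc, hu'c, hud, hudd⟩ := plumb hu1 hu2
  obtain ⟨hpc, hp'c, hpd, hpdd⟩ := plumb hφpreg.1 hφpreg.2
  obtain ⟨hmc, hm'c, hmd, hmdd⟩ := plumb hφmreg.1 hφmreg.2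
  have hN1R : (1:ℝ) ≤ (N:ℝ) := by exact_mod_cast hN
  -- m-form equations for u
  have hueqm : ∀ r ∈ Set.Ioc (0:ℝ) r₀,
      mfun lam Lam (D2 u r) = -(((N:ℝ) - 1) / r) * mfun lam Lam (D1 u r) - μ * u r := by
    intro r hr
    have h := heqIn r hr
    rw [h, mfun_Mfun hlam hlL]
    have hg : max (r - r₀) (0:ℝ) = 0 := max_eq_right (by linarith [hr.2])
    rw [hg, add_zero]
  have huineqm : ∀ r ∈ Set.Ioc r₀ (1:ℝ),
      -(((N:ℝ) - 1) / r) * mfun lam Lam (D1 u r) - μ * u r + max (r - r₀) 0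
        ≤ mfun lam Lam (D2 u r) := by
    intro r hr
    have h := hineqOut r hr
    have := mfun_mono hlam hlL h
    rwa [mfun_Mfun hlam hlL] at this
  -- m-form equations for φp, φm
  have hpeqm : ∀ r ∈ Set.Ioc (0:ℝ) 1,
      mfun lam Lam (D2 φp r) = -(((N:ℝ) - 1) / r) * mfun lam Lam (D1 φp r) - μ * φp r := by
    intro r hr
    rw [hφpeq r hr, mfun_Mfun hlam hlL]
  have hmeqm : ∀ r ∈ Set.Ioc (0:ℝ) 1,
      mfun lam Lam (D2 φm r) = -(((N:ℝ) - 1) / r) * mfun lam Lam (D1 φm r) - μ * φm r := by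
    intro r hr
    rw [hφmeq r hr, mfun_Mfun hlam hlL]
  -- choose the matching half-eigenfunction
  obtain ⟨c, φ, hc0, hφc, hφ'c, hφd, hφdd, hφeqm, hφmatch, hφ'0, hφpos1⟩ :
      ∃ c φ, 0 ≤ c ∧ ContinuousOn φ (Set.Icc 0 1) ∧ ContinuousOn (D1 φ) (Set.Icc 0 1) ∧
        (∀ r ∈ Set.Ioo (0:ℝ) 1, HasDerivAt φ (D1 φ r) r) ∧
        (∀ r ∈ Set.Ioo (0:ℝ) 1, HasDerivAt (D1 φ) (D2 φ r) r) ∧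
        (∀ r ∈ Set.Ioc (0:ℝ) 1,
          mfun lam Lam (D2 φ r) = -(((N:ℝ) - 1) / r) * mfun lam Lam (D1 φ r) - μ * φ r) ∧
        c * φ 0 = u 0 ∧ D1 φ 0 = 0 ∧ (∀ r ∈ Set.Ioc r₀ 1, 0 < φ r) := by
    rcases le_or_gt 0 (u 0) with hsign | hsign
    · exact ⟨u 0, φp, hsign, hpc, hp'c, hpd, hpdd, hpeqm, by rw [hφp0]; ring, hφp0',
        fun r hr => (hpos r hr).1⟩
    · exact ⟨-(u 0), φm, by linarith, hmc, hm'c, hmd, hmdd, hmeqm, by rw [hφm0]; ring, hφm0',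
        fun r hr => (hpos r hr).2⟩
  -- scaled comparison function facts
  have hvc : ContinuousOn (fun r => c * φ r) (Set.Icc 0 1) := continuousOn_const.mul hφc
  have hv'c : ContinuousOn (fun r => c * D1 φ r) (Set.Icc 0 1) := continuousOn_const.mul hφ'c
  have hvd : ∀ r ∈ Set.Ioo (0:ℝ) 1, HasDerivAt (fun y => c * φ y) (c * D1 φ r) r :=
    fun r hr => (hφd r hr).const_mul c
  have hvdd : ∀ r ∈ Set.Ioo (0:ℝ) 1, HasDerivAt (fun y => c * D1 φ y) (c * D2 φ r) r :=
    fun r hr => (hφdd r hr).const_mul c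
  have hveqm : ∀ r ∈ Set.Ioc (0:ℝ) 1,
      mfun lam Lam (c * D2 φ r)
        = -(((N:ℝ) - 1) / r) * mfun lam Lam (c * D1 φ r) - μ * (c * φ r) := by
    intro r hr
    rw [mfun_smul hlam hc0, mfun_smul hlam hc0, hφeqm r hr]; ring
  have hsubO : Set.Ioc (0:ℝ) r₀ ⊆ Set.Ioo (0:ℝ) 1 := fun t ht =>
    ⟨ht.1, lt_of_le_of_lt ht.2 r₀lt1⟩
  have hsubI : Set.Icc (0:ℝ) r₀ ⊆ Set.Icc (0:ℝ) 1 := Set.Icc_subset_Icc le_rfl r₀lt1.le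
  have hsubO1 : Set.Ioc (0:ℝ) r₀ ⊆ Set.Ioc (0:ℝ) 1 := fun t ht => ⟨ht.1, le_of_lt (hsubO ht).2⟩
  -- STEP 1 : u = c φ on [0, r₀]
  have step1 : ∀ r ∈ Set.Icc (0:ℝ) r₀, u r = c * φ r ∧ D1 u r = c * D1 φ r := by
    have hw0 : u 0 = c * φ 0 := hφmatch.symm
    have hG0 : D1 u 0 = c * D1 φ 0 := by rw [hu0', hφ'0]; ring
    rcases lt_or_ge N 2 with hNlt | hNge
    · -- N = 1
      have hN1 : N = 1 := le_antisymm (by omega) hN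
      refine uniq_int lam Lam hlam hlL N μ 0 r₀ 0 r₀pos ?_ u (fun r => c * φ r)
        (D1 u) (fun r => c * D1 φ r) (D2 u) (fun r => c * D2 φ r)
        (huc.mono hsubI) (hvc.mono hsubI) (hu'c.mono hsubI) (hv'c.mono hsubI)
        (fun r hr => hud r (hsubO hr)) (fun r hr => hvd r (hsubO hr))
        (fun r hr => hudd r (hsubO hr)) (fun r hr => hvdd r (hsubO hr))
        hueqm (fun r hr => hveqm r (hsubO1 hr)) hw0 hG0
      intro r hr
      rw [hN1]
      norm_num
    · -- N ≥ 2
      have hN2R : (1:ℝ) ≤ (N:ℝ) - 1 := by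
        have : (2:ℝ) ≤ (N:ℝ) := by exact_mod_cast hNge
        linarith
      exact uniq_sign lam Lam hlam hlL N μ hN2R 0 r₀ r₀pos le_rfl r₀lt1.le
        u (fun r => c * φ r) (D1 u) (fun r => c * D1 φ r) (D2 u) (fun r => c * D2 φ r)
        (huc.mono hsubI) (hvc.mono hsubI) (hu'c.mono hsubI) (hv'c.mono hsubI)
        (fun r hr => hud r (hsubO hr)) (fun r hr => hvd r (hsubO hr))
        (fun r hr => hudd r (hsubO hr)) (fun r hr => hvdd r (hsubO hr))
        hueqm (fun r hr => hveqm r (hsubO1 hr)) hw0 hG0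
  have hhr₀ : u r₀ - c * φ r₀ = 0 := by
    have := (step1 r₀ ⟨r₀pos.le, le_rfl⟩).1; linarith
  have hΔr₀ : D1 u r₀ - c * D1 φ r₀ = 0 := by
    have := (step1 r₀ ⟨r₀pos.le, le_rfl⟩).2; linarith
  -- difference function facts
  have hhc : ContinuousOn (fun r => u r - c * φ r) (Set.Icc 0 1) := huc.sub hvc
  have hΔc : ContinuousOn (fun r => D1 u r - c * D1 φ r) (Set.Icc 0 1) := hu'c.sub hv'c
  have hhd : ∀ r ∈ Set.Ioo (0:ℝ) 1,
      HasDerivAt (fun y => u y - c * φ y) (D1 u r - c * D1 φ r) r :=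
    fun r hr => (hud r hr).sub (hvd r hr)
  have hΔd : ∀ r ∈ Set.Ioo (0:ℝ) 1,
      HasDerivAt (fun y => D1 u y - c * D1 φ y) (D2 u r - c * D2 φ r) r :=
    fun r hr => (hudd r hr).sub (hvdd r hr)
  have hφ1pos : 0 < φ 1 := hφpos1 1 ⟨r₀lt1, le_rfl⟩
  have hh1 : u 1 - c * φ 1 ≤ 0 := by
    rw [hu1val]
    nlinarith
  by_cases hA : ∀ r ∈ Set.Icc r₀ 1, u r - c * φ r ≤ 0
  · -- CASE A : u ≤ c φ on [r₀, 1]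
    have hΔctsAt : ContinuousAt (fun r => D1 u r - c * D1 φ r) r₀ :=
      hΔc.continuousAt (Icc_mem_nhds r₀pos r₀lt1)
    obtain ⟨δ, hδpos, hδ⟩ := cont_small hΔctsAt hΔr₀ (show (0:ℝ) < 1 / (2 * (|μ| + 1)) by positivity)
    set ρ : ℝ := min (r₀ + δ) ((r₀ + 1) / 2) with hρdef
    have hρgt : r₀ < ρ := lt_min (by linarith) (by linarith)
    have hρlt1 : ρ < 1 := lt_of_le_of_lt (min_le_right _ _) (by linarith)
    have hΔsmall : ∀ t ∈ Set.Icc r₀ ρ, |D1 u t - c * D1 φ t| ≤ 1 / (2 * (|μ| + 1)) := by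
      intro t ht
      refine hδ t ?_
      rw [abs_of_nonneg (by linarith [ht.1])]
      have := ht.2
      have := min_le_left (r₀ + δ) ((r₀ + 1) / 2)
      linarith
    have hsubA : Set.Icc r₀ ρ ⊆ Set.Icc (0:ℝ) 1 :=
      Set.Icc_subset_Icc r₀pos.le hρlt1.le
    have hsubAO : Set.Ioc r₀ ρ ⊆ Set.Ioo (0:ℝ) 1 := fun t ht =>
      ⟨lt_trans r₀pos ht.1, lt_of_le_of_lt ht.2 hρlt1⟩
    -- |h| bound near r₀
    have hhb : ∀ t ∈ Set.Icc r₀ ρ, |u t - c * φ t| ≤ (1 / (2 * (|μ| + 1))) * (t - r₀) := by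
      intro t ht
      have := mvt' (f := fun y => u y - c * φ y) (f' := fun y => D1 u y - c * D1 φ y)
        hρgt.le (hhc.mono hsubA)
        (fun x hx => hhd x (hsubAO hx))
        (fun x hx => hΔsmall x (Set.Ioc_subset_Icc_self hx)) t ht
      simpa only [hhr₀, sub_zero] using this
    -- Δ ≥ 0 on [r₀, ρ]
    have hΔnonneg : ∀ t ∈ Set.Icc r₀ ρ, 0 ≤ D1 u t - c * D1 φ t := by
      by_contra hcon
      push_neg at hcon
      obtain ⟨τ, hτmem, hτneg⟩ := hcon
      obtain ⟨r₂, hr₂mem, hr₂min⟩ := isCompact_Icc.exists_isMinOn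
        (Set.nonempty_Icc.2 hτmem.1) ((hΔc.mono (Set.Icc_subset_Icc r₀pos.le
          (le_trans hτmem.2 hρlt1.le))))
      have hr₂neg : D1 u r₂ - c * D1 φ r₂ < 0 := lt_of_le_of_lt (hr₂min ⟨hτmem.1, le_rfl⟩) hτneg
      have hr₂gt : r₀ < r₂ := by
        rcases eq_or_lt_of_le hr₂mem.1 with h | h
        · exfalso; rw [← h] at hr₂neg; rw [hΔr₀] at hr₂neg; exact lt_irrefl 0 hr₂neg
        · exact h
      have hr₂O : r₂ ∈ Set.Ioo (0:ℝ) 1 :=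
        ⟨lt_trans r₀pos hr₂gt, lt_of_le_of_lt (le_trans hr₂mem.2 hτmem.2) hρlt1⟩
      have hr₂Ioc1 : r₂ ∈ Set.Ioc r₀ (1:ℝ) := ⟨hr₂gt, hr₂O.2.le⟩
      -- second derivative of difference at the min is ≤ 0
      have hdK : D2 u r₂ - c * D2 φ r₂ ≤ 0 := by
        refine deriv_nonpos_of_min_left hr₂gt (hΔd r₂ hr₂O) ?_
        intro t ht
        exact hr₂min ⟨ht.1, le_trans ht.2.le hr₂mem.2⟩
      have hmono2 : mfun lam Lam (D2 u r₂) ≤ mfun lam Lam (c * D2 φ r₂) :=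
        mfun_mono hlam hlL (by linarith)
      have hmono1 : mfun lam Lam (D1 u r₂) ≤ mfun lam Lam (c * D1 φ r₂) :=
        mfun_mono hlam hlL (by linarith)
      have hineq2 := huineqm r₂ hr₂Ioc1
      have heq2 := hveqm r₂ ⟨hr₂O.1, hr₂O.2.le⟩
      have hcoef : 0 ≤ ((N:ℝ) - 1) / r₂ := div_nonneg (by linarith) hr₂O.1.le
      have hgval : max (r₂ - r₀) (0:ℝ) = r₂ - r₀ := max_eq_left (by linarith)
      rw [hgval] at hineq2
      have hterm : 0 ≤ (((N:ℝ) - 1) / r₂) *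
          (mfun lam Lam (c * D1 φ r₂) - mfun lam Lam (D1 u r₂)) :=
        mul_nonneg hcoef (by linarith)
      have hkey : r₂ - r₀ ≤ μ * (u r₂ - c * φ r₂) := by nlinarith
      have hbd := hhb r₂ ⟨hr₂mem.1, le_trans hr₂mem.2 hτmem.2⟩
      have hμb : μ * (u r₂ - c * φ r₂) ≤ |μ| * ((1 / (2 * (|μ| + 1))) * (r₂ - r₀)) := by
        calc μ * (u r₂ - c * φ r₂) ≤ |μ * (u r₂ - c * φ r₂)| := le_abs_self _
          _ = |μ| * |u r₂ - c * φ r₂| := abs_mul _ _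
          _ ≤ |μ| * ((1 / (2 * (|μ| + 1))) * (r₂ - r₀)) :=
            mul_le_mul_of_nonneg_left hbd (abs_nonneg _)
      have habs : |μ| * (1 / (2 * (|μ| + 1))) ≤ 1 / 2 := by
        rw [mul_one_div, div_le_div_iff₀ (by positivity) (by norm_num)]
        nlinarith [abs_nonneg μ]
      nlinarith [abs_nonneg μ]
    -- h is monotone hence ≡ 0 on [r₀, ρ]
    have hhmono : MonotoneOn (fun y => u y - c * φ y) (Set.Icc r₀ ρ) := by
      refine monotoneOn_of_deriv_nonneg (convex_Icc _ _) (hhc.mono hsubA) ?_ ?_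
      · intro t ht
        rw [interior_Icc] at ht
        exact ((hhd t ⟨lt_trans r₀pos ht.1, lt_trans ht.2 hρlt1⟩).differentiableAt).differentiableWithinAt
      · intro t ht
        rw [interior_Icc] at ht
        have hder := (hhd t ⟨lt_trans r₀pos ht.1, lt_trans ht.2 hρlt1⟩).deriv
        rw [hder]
        exact hΔnonneg t (Set.Ioo_subset_Icc_self ht)
    have hhzero : ∀ t ∈ Set.Icc r₀ ρ, u t - c * φ t = 0 := by
      intro t ht
      have h1 : u r₀ - c * φ r₀ ≤ u t - c * φ t := hhmono ⟨le_rfl, hρgt.le⟩ ht ht.1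
      rw [hhr₀] at h1
      have h2 := hA t ⟨ht.1, le_trans ht.2 hρlt1.le⟩
      linarith
    -- conclude via final_contra at the midpoint
    set r₁ : ℝ := (r₀ + ρ) / 2 with hr₁def
    have hr₁mem : r₁ ∈ Set.Ioo r₀ ρ := ⟨by linarith, by linarith⟩
    have hr₁O : r₁ ∈ Set.Ioo (0:ℝ) 1 := ⟨by linarith, by linarith⟩
    have hΔzero : ∀ t ∈ Set.Ioo r₀ ρ, D1 u t - c * D1 φ t = 0 := by
      intro t ht
      have htO : t ∈ Set.Ioo (0:ℝ) 1 := ⟨by linarith [ht.1], by linarith [ht.2]⟩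
      have h1 : HasDerivAt (fun y => u y - c * φ y) 0 t := by
        refine (hasDerivAt_const t 0).congr_of_eventuallyEq ?_
        filter_upwards [Ioo_mem_nhds ht.1 ht.2] with x hx
        exact hhzero x (Set.Ioo_subset_Icc_self hx)
      exact (hhd t htO).unique h1
    have hKzero : D2 u r₁ - c * D2 φ r₁ = 0 := by
      have h1 : HasDerivAt (fun y => D1 u y - c * D1 φ y) 0 r₁ := by
        refine (hasDerivAt_const r₁ 0).congr_of_eventuallyEq ?_
        filter_upwards [Ioo_mem_nhds hr₁mem.1 hr₁mem.2] with x hx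
        exact hΔzero x hx
      exact (hΔd r₁ hr₁O).unique h1
    refine final_contra lam Lam hlam hlL N μ r₀ u φ c r₁ hc0 ⟨hr₁mem.1, hr₁O.2.le⟩
      (by have := hhzero r₁ (Set.Ioo_subset_Icc_self hr₁mem); linarith)
      (by have := hΔzero r₁ hr₁mem; linarith)
      (by linarith)
      (hφeqm r₁ ⟨hr₁O.1, hr₁O.2.le⟩)
      (huineqm r₁ ⟨hr₁mem.1, hr₁O.2.le⟩)
  · -- CASE B : touching argument
    push_neg at hA
    obtain ⟨ρh, hρhmem, hρhpos⟩ := hA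
    have hρhgt : r₀ < ρh := by
      rcases eq_or_lt_of_le hρhmem.1 with h | h
      · exfalso; rw [← h, hhr₀] at hρhpos; exact lt_irrefl 0 hρhpos
      · exact h
    have hρhlt : ρh ≤ 1 := hρhmem.2
    -- φ is nonnegative on [r₀, 1]
    have hφr₀nonneg : 0 ≤ φ r₀ := by
      have hφct : ContinuousAt φ r₀ := hφc.continuousAt (Icc_mem_nhds r₀pos r₀lt1)
      refine ge_of_tendsto (hφct.tendsto.mono_left (nhdsWithin_le_nhds (s := Set.Ioi r₀))) ?_
      filter_upwards [Ioo_mem_nhdsGT_of_mem (Set.left_mem_Ico.2 r₀lt1)] with t ht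
      exact (hφpos1 t ⟨ht.1, ht.2.le⟩).le
    have hφnonneg : ∀ r ∈ Set.Icc r₀ 1, 0 ≤ φ r := by
      intro r hr
      rcases eq_or_lt_of_le hr.1 with h | h
      · rwa [← h]
      · exact (hφpos1 r ⟨h, hr.2⟩).le
    -- nondegeneracy of φ at r₀
    have hnondeg : 0 < φ r₀ ∨ (φ r₀ = 0 ∧ 0 < D1 φ r₀) := by
      rcases eq_or_lt_of_le hφr₀nonneg with heq0 | hpos0
      · right
        refine ⟨heq0.symm, ?_⟩
        have hφ'r₀nonneg : 0 ≤ D1 φ r₀ := by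
          refine deriv_nonneg_of_min_right r₀lt1 (hφd r₀ ⟨r₀pos, r₀lt1⟩) ?_
          intro t ht
          rw [← heq0]
          exact (hφpos1 t ⟨ht.1, ht.2.le⟩).le
        rcases eq_or_lt_of_le hφ'r₀nonneg with heq0' | hpos0'
        · exfalso
          have hb'lt : (r₀ + 1) / 2 < 1 := by linarith
          have hb'gt : r₀ < (r₀ + 1) / 2 := by linarith
          have hsubB : Set.Icc r₀ ((r₀ + 1) / 2) ⊆ Set.Icc (0:ℝ) 1 :=
            Set.Icc_subset_Icc r₀pos.le hb'lt.le
          have hsubBO : Set.Ioc r₀ ((r₀ + 1) / 2) ⊆ Set.Ioo (0:ℝ) 1 := fun t ht =>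
            ⟨lt_trans r₀pos ht.1, lt_of_le_of_lt ht.2 hb'lt⟩
          have huniq := uniq_int lam Lam hlam hlL N μ r₀ ((r₀ + 1) / 2) (((N:ℝ) - 1) / r₀)
            hb'gt ?_ φ (fun _ => 0) (D1 φ) (fun _ => 0) (D2 φ) (fun _ => 0)
            (hφc.mono hsubB) continuousOn_const (hφ'c.mono hsubB) continuousOn_const
            (fun r hr => hφd r (hsubBO hr)) (fun r _ => hasDerivAt_const r 0)
            (fun r hr => hφdd r (hsubBO hr)) (fun r _ => hasDerivAt_const r 0)
            (fun r hr => hφeqm r ⟨lt_trans r₀pos hr.1, le_trans hr.2 hb'lt.le⟩)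
            (fun r _ => by simp [mfun_zero])
            heq0.symm (heq0'.symm)
          · have hmid := (huniq ((r₀ + 1) / 2) ⟨hb'gt.le, le_rfl⟩).1
            have hposmid := hφpos1 ((r₀ + 1) / 2) ⟨hb'gt, hb'lt.le⟩
            rw [hmid] at hposmid
            exact lt_irrefl 0 hposmid
          · intro r hr
            have hrpos : 0 < r := lt_trans r₀pos hr.1
            rw [abs_of_nonneg (div_nonneg (by linarith) hrpos.le)]
            gcongr
            · exact hr.1.le
        · exact hpos0'
      · left; exact hpos0
    -- wedge bound near r₀
    have hwedge : ∀ ε : ℝ, 0 < ε → ∃ E, r₀ ≤ E ∧ E < 1 ∧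
        (∀ r ∈ Set.Icc r₀ E, u r - c * φ r ≤ ε * φ r) ∧ 0 < φ E := by
      intro ε hε
      rcases hnondeg with hp0 | ⟨hz0, hκ⟩
      · refine ⟨r₀, le_rfl, r₀lt1, ?_, hp0⟩
        intro r hrr
        have hre : r = r₀ := le_antisymm hrr.2 hrr.1
        rw [hre, hhr₀]
        positivity
      · obtain ⟨z, hzgt, hzlow⟩ := exists_slope_lower (hφd r₀ ⟨r₀pos, r₀lt1⟩)
          (show D1 φ r₀ / 2 < D1 φ r₀ by linarith)
        obtain ⟨δ2, hδ2pos, hδ2⟩ := cont_small (hΔc.continuousAt (Icc_mem_nhds r₀pos r₀lt1))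
          hΔr₀ (show (0:ℝ) < ε * (D1 φ r₀ / 2) / 2 by positivity)
        have hEgt : r₀ < min (min ((r₀ + z) / 2) (r₀ + δ2)) ((r₀ + 1) / 2) :=
          lt_min (lt_min (by linarith) (by linarith)) (by linarith)
        set E := min (min ((r₀ + z) / 2) (r₀ + δ2)) ((r₀ + 1) / 2) with hEdef
        have hElt1 : E < 1 := lt_of_le_of_lt (min_le_right _ _) (by linarith)
        have hElez : E < z := lt_of_le_of_lt (le_trans (min_le_left _ _) (min_le_left _ _))
          (by linarith)
        have hEδ : E ≤ r₀ + δ2 := le_trans (min_le_left _ _) (min_le_right _ _)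
        have hΔbd : ∀ t ∈ Set.Ioc r₀ E, |D1 u t - c * D1 φ t| ≤ ε * (D1 φ r₀ / 2) / 2 := by
          intro t ht
          exact hδ2 t (by rw [abs_of_nonneg (by linarith [ht.1])]; linarith [ht.2, hEδ])
        have hhbd := mvt' (f := fun y => u y - c * φ y)
          (f' := fun y => D1 u y - c * D1 φ y) hEgt.le
          (hhc.mono (Set.Icc_subset_Icc r₀pos.le hElt1.le))
          (fun x hx => hhd x ⟨lt_trans r₀pos hx.1, lt_of_le_of_lt hx.2 hElt1⟩)
          hΔbd
        refine ⟨E, hEgt.le, hElt1, ?_, hφpos1 E ⟨hEgt, hElt1.le⟩⟩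
        intro r hrr
        rcases eq_or_lt_of_le hrr.1 with heq | hlt
        · rw [← heq, hhr₀, hz0, mul_zero]
        · have h1 := hhbd r hrr
          simp only [hhr₀, sub_zero] at h1
          have h2 : (D1 φ r₀ / 2) * (r - r₀) < φ r := by
            have h2a := hzlow r ⟨hlt, lt_of_le_of_lt hrr.2 hElez⟩
            rw [hz0, sub_zero] at h2a
            linarith
          have h3 : u r - c * φ r ≤ ε * (D1 φ r₀ / 2) / 2 * (r - r₀) :=
            le_trans (le_abs_self _) h1
          have h4 : ε * ((D1 φ r₀ / 2) * (r - r₀)) ≤ ε * φ r :=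
            mul_le_mul_of_nonneg_left h2.le hε.le
          have h5 : ε * (D1 φ r₀ / 2) / 2 * (r - r₀) ≤ ε * ((D1 φ r₀ / 2) * (r - r₀)) := by
            nlinarith [mul_nonneg (mul_nonneg hε.le hκ.le) (sub_nonneg.2 hlt.le)]
          linarith
    -- the comparison set S and its infimum
    set S : Set ℝ := {t : ℝ | 0 ≤ t ∧ ∀ r ∈ Set.Icc r₀ 1, u r - c * φ r ≤ t * φ r} with hSdef
    obtain ⟨E0, hE0ge, hE0lt, hE0small, hE0pos⟩ := hwedge 1 one_pos
    have hsubE0 : Set.Icc E0 1 ⊆ Set.Icc (0:ℝ) 1 :=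
      Set.Icc_subset_Icc (by linarith) le_rfl
    obtain ⟨rm, hrmmem, hrmmin⟩ := isCompact_Icc.exists_isMinOn
      (Set.nonempty_Icc.2 hE0lt.le) (hφc.mono hsubE0)
    have hφrm : 0 < φ rm := by
      rcases eq_or_lt_of_le hrmmem.1 with h | h
      · rwa [← h]
      · exact hφpos1 rm ⟨lt_of_le_of_lt hE0ge h, hrmmem.2⟩
    obtain ⟨rM, hrMmem, hrMmax⟩ := isCompact_Icc.exists_isMaxOn
      (Set.nonempty_Icc.2 hE0lt.le) ((hhc.mono hsubE0))
    have hSne : S.Nonempty := by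
      refine ⟨max ((u rM - c * φ rM) / φ rm) 1, ?_, ?_⟩
      · exact le_trans zero_le_one (le_max_right _ _)
      · intro r hr
        have ht₀1 : (1:ℝ) ≤ max ((u rM - c * φ rM) / φ rm) 1 := le_max_right _ _
        have hφr := hφnonneg r hr
        rcases le_total r E0 with hrE | hrE
        · have h1 := hE0small r ⟨hr.1, hrE⟩
          rw [one_mul] at h1
          have h2 := mul_le_mul_of_nonneg_right ht₀1 hφr
          rw [one_mul] at h2
          linarith
        · have h1 : u r - c * φ r ≤ u rM - c * φ rM := hrMmax ⟨hrE, hr.2⟩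
          have h2 : (u rM - c * φ rM) / φ rm ≤ max ((u rM - c * φ rM) / φ rm) 1 :=
            le_max_left _ _
          have h3 : u rM - c * φ rM ≤ max ((u rM - c * φ rM) / φ rm) 1 * φ rm := by
            rw [div_le_iff₀ hφrm] at h2
            linarith
          have h4 : φ rm ≤ φ r := hrmmin ⟨hrE, hr.2⟩
          have h5 : max ((u rM - c * φ rM) / φ rm) 1 * φ rm
              ≤ max ((u rM - c * φ rM) / φ rm) 1 * φ r :=
            mul_le_mul_of_nonneg_left h4 (le_trans zero_le_one ht₀1)
          linarith
    have hSbdd : BddBelow S := ⟨0, fun t ht => ht.1⟩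
    set tstar := sInf S with htstardef
    have hφρh : 0 < φ ρh := hφpos1 ρh ⟨hρhgt, hρhlt⟩
    have htpos : 0 < tstar := by
      have hq : 0 < (u ρh - c * φ ρh) / φ ρh := div_pos hρhpos hφρh
      refine lt_of_lt_of_le hq (le_csInf hSne ?_)
      intro t ht
      rw [div_le_iff₀ hφρh]
      have h1 := ht.2 ρh hρhmem
      linarith
    have htmem : ∀ r ∈ Set.Icc r₀ 1, u r - c * φ r ≤ tstar * φ r := by
      intro r hr
      rcases eq_or_lt_of_le (hφnonneg r hr) with hz | hp
      · obtain ⟨t1, ht1⟩ := hSne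
        have h1 := ht1.2 r hr
        rw [← hz] at h1 ⊢
        simp only [mul_zero] at h1 ⊢
        exact h1
      · have h1 : (u r - c * φ r) / φ r ≤ tstar := by
          refine le_csInf hSne ?_
          intro t ht
          rw [div_le_iff₀ hp]
          have h2 := ht.2 r hr
          linarith
        rw [div_le_iff₀ hp] at h1
        linarith
    -- touching point
    obtain ⟨E, hEge, hElt, hEsmall, hEpos⟩ := hwedge (tstar / 2) (by positivity)
    have hφposE : ∀ r ∈ Set.Icc E 1, 0 < φ r := by
      intro r hr
      rcases eq_or_lt_of_le hr.1 with h | h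
      · rwa [← h]
      · exact hφpos1 r ⟨lt_of_le_of_lt hEge h, hr.2⟩
    have hsubE : Set.Icc E 1 ⊆ Set.Icc r₀ 1 := Set.Icc_subset_Icc hEge le_rfl
    have hsubE1 : Set.Icc E 1 ⊆ Set.Icc (0:ℝ) 1 := Set.Icc_subset_Icc (by linarith) le_rfl
    have htouch : ∃ r₁ ∈ Set.Icc E 1, u r₁ - c * φ r₁ = tstar * φ r₁ := by
      by_contra hnt
      push_neg at hnt
      have hstrict : ∀ r ∈ Set.Icc E 1, u r - c * φ r < tstar * φ r := fun r hr =>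
        lt_of_le_of_ne (htmem r (hsubE hr)) (hnt r hr)
      have hψc : ContinuousOn (fun r => (u r - c * φ r) / φ r) (Set.Icc E 1) :=
        (hhc.mono hsubE1).div (hφc.mono hsubE1) (fun r hr => (hφposE r hr).ne')
      obtain ⟨rψ, hrψmem, hrψmax⟩ := isCompact_Icc.exists_isMaxOn
        (Set.nonempty_Icc.2 hElt.le) hψc
      have ht''lt : (u rψ - c * φ rψ) / φ rψ < tstar := by
        rw [div_lt_iff₀ (hφposE rψ hrψmem)]
        have h1 := hstrict rψ hrψmem
        linarith
      have ht'lt : max (tstar / 2) ((u rψ - c * φ rψ) / φ rψ) < tstar :=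
        max_lt (by linarith) ht''lt
      have ht'S : max (tstar / 2) ((u rψ - c * φ rψ) / φ rψ) ∈ S := by
        refine ⟨le_trans (by positivity) (le_max_left _ _), ?_⟩
        intro r hr
        rcases le_total r E with hrE | hrE
        · have h1 := hEsmall r ⟨hr.1, hrE⟩
          have hφr := hφnonneg r hr
          have h2 : tstar / 2 * φ r ≤ max (tstar / 2) ((u rψ - c * φ rψ) / φ rψ) * φ r :=
            mul_le_mul_of_nonneg_right (le_max_left _ _) hφr
          linarith
        · have hφr := hφposE r ⟨hrE, hr.2⟩
          have h1 : (u r - c * φ r) / φ r ≤ (u rψ - c * φ rψ) / φ rψ :=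
            hrψmax ⟨hrE, hr.2⟩
          have h2 : u r - c * φ r ≤ (u rψ - c * φ rψ) / φ rψ * φ r := by
            rw [div_le_iff₀ hφr] at h1
            linarith
          have h3 : (u rψ - c * φ rψ) / φ rψ * φ r
              ≤ max (tstar / 2) ((u rψ - c * φ rψ) / φ rψ) * φ r :=
            mul_le_mul_of_nonneg_right (le_max_right _ _) hφr.le
          linarith
      have := csInf_le hSbdd ht'S
      rw [← htstardef] at this
      linarith
    obtain ⟨r₁, hr₁mem, hr₁eq⟩ := htouch
    have hr₁gt : r₀ < r₁ := by
      rcases eq_or_lt_of_le (le_trans hEge hr₁mem.1) with h | h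
      · exfalso
        have hp := hφposE r₁ hr₁mem
        have hzz : u r₁ - c * φ r₁ = 0 := by rw [← h]; exact hhr₀
        rw [hzz] at hr₁eq
        nlinarith [mul_pos htpos hp]
      · exact h
    have hr₁lt : r₁ < 1 := by
      rcases eq_or_lt_of_le hr₁mem.2 with h | h
      · exfalso
        rw [h] at hr₁eq
        nlinarith [mul_pos htpos hφ1pos, hh1]
      · exact h
    have hr₁O : r₁ ∈ Set.Ioo (0:ℝ) 1 := ⟨lt_trans r₀pos hr₁gt, hr₁lt⟩
    -- w := u - (c + tstar) φ has an interior maximum at r₁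
    have hring : ∀ x y : ℝ, (c + tstar) * x - (c * x + tstar * x) = 0 := fun x y => by ring
    have hwle : ∀ t ∈ Set.Icc r₀ 1, u t - (c + tstar) * φ t ≤ 0 := by
      intro t ht
      have h1 := htmem t ht
      have h2 : (c + tstar) * φ t = c * φ t + tstar * φ t := by ring
      linarith
    have hwr₁ : u r₁ - (c + tstar) * φ r₁ = 0 := by
      have h2 : (c + tstar) * φ r₁ = c * φ r₁ + tstar * φ r₁ := by ring
      linarith
    have hwd : HasDerivAt (fun y => u y - (c + tstar) * φ y)
        (D1 u r₁ - (c + tstar) * D1 φ r₁) r₁ :=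
      (hud r₁ hr₁O).sub ((hφd r₁ hr₁O).const_mul _)
    have hmax : IsLocalMax (fun y => u y - (c + tstar) * φ y) r₁ := by
      filter_upwards [Ioo_mem_nhds hr₁gt hr₁lt] with t ht
      have h1 := hwle t ⟨ht.1.le, ht.2.le⟩
      show u t - (c + tstar) * φ t ≤ u r₁ - (c + tstar) * φ r₁
      rw [hwr₁]
      exact h1
    have hD1eq : D1 u r₁ - (c + tstar) * D1 φ r₁ = 0 := by
      have h3 := hwd.deriv
      rw [hmax.deriv_eq_zero] at h3
      exact h3.symm
    have hKle : D2 u r₁ - (c + tstar) * D2 φ r₁ ≤ 0 := by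
      by_contra hK
      push_neg at hK
      have hΔτd : HasDerivAt (fun y => D1 u y - (c + tstar) * D1 φ y)
          (D2 u r₁ - (c + tstar) * D2 φ r₁) r₁ :=
        (hudd r₁ hr₁O).sub ((hφdd r₁ hr₁O).const_mul _)
      obtain ⟨z, hzgt, hzlow⟩ := exists_slope_lower hΔτd
        (show (D2 u r₁ - (c + tstar) * D2 φ r₁) / 2 < D2 u r₁ - (c + tstar) * D2 φ r₁
          by linarith)
      have hz₂gt : r₁ < min z ((r₁ + 1) / 2) := lt_min hzgt (by linarith)
      have hz₂lt : min z ((r₁ + 1) / 2) ≤ (r₁ + 1) / 2 := min_le_right _ _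
      have hmgt : r₁ < (r₁ + min z ((r₁ + 1) / 2)) / 2 := by linarith
      have hmlt1 : (r₁ + min z ((r₁ + 1) / 2)) / 2 < 1 := by
        have := hz₂lt; linarith
      have hΔτpos : ∀ t ∈ Set.Ioo r₁ (min z ((r₁ + 1) / 2)),
          0 < D1 u t - (c + tstar) * D1 φ t := by
        intro t ht
        have h1 : (D2 u r₁ - (c + tstar) * D2 φ r₁) / 2 * (t - r₁)
            < (D1 u t - (c + tstar) * D1 φ t) - (D1 u r₁ - (c + tstar) * D1 φ r₁) :=
          hzlow t ⟨ht.1, lt_of_lt_of_le ht.2 (min_le_left _ _)⟩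
        rw [hD1eq, sub_zero] at h1
        have h2 : 0 < (D2 u r₁ - (c + tstar) * D2 φ r₁) / 2 * (t - r₁) :=
          mul_pos (by linarith) (by linarith [ht.1])
        linarith
      have hmono := strictMonoOn_of_deriv_pos
        (convex_Icc r₁ ((r₁ + min z ((r₁ + 1) / 2)) / 2))
        ((huc.sub ((continuousOn_const (c := c + tstar)).mul hφc)).mono
          (Set.Icc_subset_Icc hr₁O.1.le hmlt1.le))
        (fun t ht => by
          rw [interior_Icc] at ht
          have htO : t ∈ Set.Ioo (0:ℝ) 1 :=
            ⟨lt_trans hr₁O.1 ht.1, lt_trans ht.2 hmlt1⟩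
          have hd := ((hud t htO).sub ((hφd t htO).const_mul (c + tstar))).deriv
          show 0 < deriv (u - fun y => (c + tstar) * φ y) t
          rw [hd]
          refine hΔτpos t ⟨ht.1, ?_⟩
          calc t < (r₁ + min z ((r₁ + 1) / 2)) / 2 := ht.2
            _ ≤ min z ((r₁ + 1) / 2) := by linarith [hz₂gt]
          )
      have hlt : u r₁ - (c + tstar) * φ r₁
          < u ((r₁ + min z ((r₁ + 1) / 2)) / 2)
            - (c + tstar) * φ ((r₁ + min z ((r₁ + 1) / 2)) / 2) :=
        hmono (Set.left_mem_Icc.2 hmgt.le) (Set.right_mem_Icc.2 hmgt.le) hmgt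
      rw [hwr₁] at hlt
      have h2 := hwle ((r₁ + min z ((r₁ + 1) / 2)) / 2) ⟨by linarith, by linarith⟩
      linarith
    refine final_contra lam Lam hlam hlL N μ r₀ u φ (c + tstar) r₁
      (by linarith) ⟨hr₁gt, hr₁lt.le⟩ ?_ ?_ ?_
      (hφeqm r₁ ⟨hr₁O.1, hr₁O.2.le⟩) (huineqm r₁ ⟨hr₁gt, hr₁lt.le⟩)
    · have h2 : (c + tstar) * φ r₁ = c * φ r₁ + tstar * φ r₁ := by ring
      linarith
    · linarith [hD1eq]
    · linarith [hKle]
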